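/- Every integer sequence G with gcd(G(1), G(2)) = 1 satisfying G(n+2) = G(n) + G(n+1) is complete mod 3: every residue mod 3 occurs among the G(n). -/

import Mathlib

lemma zmod3_cover (a b r : ZMod 3) (h : ¬(a = 0 ∧ b = 0)) :
    r = a ∨ r = b ∨ r = a + b ∨ r = b + (a + b) ∨
    r = a + b + (b + (a + b)) ∨ r = b + (a + b) + (a + b + (b + (a + b))) := by
  revert h; revert a b r; decide

theorem gibonacci_complete_mod_3
    (G : ℕ → ℤ) (hab : Int.gcd (G 1) (G 2) = 1)
    (hrec : ∀ n ≥ 1, G (n + 2) = G n + G (n + 1)) :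
    ∀ r : ℤ, ∃ n ≥ 1, G n ≡ r [ZMOD 3] := by
  intro r
  have h3 : G 3 = G 1 + G 2 := hrec 1 le_rfl
  have h4 : G 4 = G 2 + G 3 := hrec 2 (by norm_num)
  have h5 : G 5 = G 3 + G 4 := hrec 3 (by norm_num)
  have h6 : G 6 = G 4 + G 5 := hrec 4 (by norm_num)
  set a : ZMod 3 := (G 1 : ZMod 3) with ha
  set b : ZMod 3 := (G 2 : ZMod 3) with hb
  have hnz : ¬(a = 0 ∧ b = 0) := by
    rintro ⟨h1, h2⟩
    have d1 : (3 : ℤ) ∣ G 1 := by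
      rwa [ZMod.intCast_zmod_eq_zero_iff_dvd] at h1
    have d2 : (3 : ℤ) ∣ G 2 := by
      rwa [ZMod.intCast_zmod_eq_zero_iff_dvd] at h2
    have : (3 : ℤ) ∣ Int.gcd (G 1) (G 2) := Int.dvd_coe_gcd d1 d2
    omega
  have key := zmod3_cover a b ((r : ZMod 3)) hnz
  have e3 : (G 3 : ZMod 3) = a + b := by rw [h3]; push_cast; ring
  have e4 : (G 4 : ZMod 3) = b + (a + b) := by rw [h4, h3]; push_cast; ring
  have e5 : (G 5 : ZMod 3) = a + b + (b + (a + b)) := by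
    rw [h5, h4, h3]; push_cast; ring
  have e6 : (G 6 : ZMod 3) = b + (a + b) + (a + b + (b + (a + b))) := by
    rw [h6, h5, h4, h3]; push_cast; ring
  rcases key with h | h | h | h | h | h
  · exact ⟨1, le_rfl, (ZMod.intCast_eq_intCast_iff _ _ _).mp (by rw [h])⟩
  · exact ⟨2, by norm_num, (ZMod.intCast_eq_intCast_iff _ _ _).mp (by rw [h])⟩
  · exact ⟨3, by norm_num, (ZMod.intCast_eq_intCast_iff _ _ _).mp (by rw [e3, h])⟩
  · exact ⟨4, by norm_num, (ZMod.intCast_eq_intCast_iff _ _ _).mp (by rw [e4, h])⟩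
  · exact ⟨5, by norm_num, (ZMod.intCast_eq_intCast_iff _ _ _).mp (by rw [e5, h])⟩
  · exact ⟨6, by norm_num, (ZMod.intCast_eq_intCast_iff _ _ _).mp (by rw [e6, h])⟩
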